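/- Finite-rank resolvent difference on the star graph: let G be a star graph with n half-line edges, Δ_D the Dirichlet Laplacian (decoupled half-lines) and Δ_M a self-adjoint Laplacian determined by vertex matrices (A,B) satisfying rank(A,B) = n and AB* self-adjoint. Then the operator (−Δ_D − i)^{−1} − (−Δ_M − i)^{−1} on L²(G) is a finite-rank operator of rank at most n, and hence is trace class. -/

import Mathlib

open MeasureTheory Complex Set
open scoped ENNReal

noncomputable section

def halfLine : Measure ℝ := volume.restrict (Set.Ioi 0)

/-- The Hilbert space `L²(G) = ⊕_{j=1}^n L²((0,∞))` of a star graph with `n` edges. -/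
abbrev starGraphL2 (n : ℕ) := PiLp 2 fun _ : Fin n => Lp ℂ 2 halfLine

/-- `Δ` is the Laplacian on the star graph with `n` half-line edges and vertex
condition `A f(0) + B f'(0+) = 0`: its graph consists of the pairs `(u, u'')` where
`u` has an `H²` representative on each edge (i.e. `f_j, f_j'` absolutely continuous,
expressed by the fundamental theorem of calculus, with `f_j, f_j', f_j'' ∈ L²`)
satisfying the vertex condition. -/
def IsStarGraphLaplacian (n : ℕ) (A B : Matrix (Fin n) (Fin n) ℂ)
    (Δ : starGraphL2 n →ₗ.[ℂ] starGraphL2 n) : Prop :=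
  ∀ u v : starGraphL2 n, (u, v) ∈ Δ.graph ↔
    ∃ f f' f'' : Fin n → ℝ → ℂ,
      (∀ j, ∀ x : ℝ, f j x = f j 0 + ∫ s in (0:ℝ)..x, f' j s) ∧
      (∀ j, ∀ x : ℝ, f' j x = f' j 0 + ∫ s in (0:ℝ)..x, f'' j s) ∧
      (∀ j, MemLp (f j) 2 halfLine) ∧
      (∀ j, MemLp (f' j) 2 halfLine) ∧
      (∀ j, MemLp (f'' j) 2 halfLine) ∧
      A.mulVec (fun j => f j 0) + B.mulVec (fun j => f' j 0) = 0 ∧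
      (∀ j, (u j : ℝ → ℂ) =ᵐ[halfLine] f j) ∧
      (∀ j, (v j : ℝ → ℂ) =ᵐ[halfLine] f'' j)

namespace StarProof

def μ0 : ℂ := ((Real.sqrt 2)⁻¹ : ℝ) * (-1 + Complex.I)

lemma μ0_sq : μ0 ^ 2 = -Complex.I := by
  have h : ((Real.sqrt 2 : ℝ) : ℂ) ^ 2 = 2 := by
    rw [← Complex.ofReal_pow, Real.sq_sqrt (by norm_num : (2:ℝ) ≥ 0)]; norm_num
  have hne : ((Real.sqrt 2 : ℝ) : ℂ) ≠ 0 := by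
    simpa using (Real.sqrt_pos.mpr (by norm_num : (0:ℝ) < 2)).ne'
  rw [μ0]
  push_cast
  rw [mul_pow, inv_pow, h]
  have : (-1 + Complex.I) ^ 2 = -2 * Complex.I := by
    have := Complex.I_sq
    ring_nf
    rw [Complex.I_sq]; ring
  rw [this]; field_simp

lemma μ0_re : μ0.re = -(Real.sqrt 2)⁻¹ := by
  have h2 : Real.sqrt 2 * Real.sqrt 2 = 2 := Real.mul_self_sqrt (by norm_num)
  have hne : Real.sqrt 2 ≠ 0 := (Real.sqrt_pos.mpr (by norm_num : (0:ℝ)<2)).ne'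
  simp [μ0, Complex.mul_re, Complex.ofReal_re, Complex.ofReal_im]
  field_simp
  rw [Real.sq_sqrt (by norm_num)]

lemma μ0_ne : μ0 ≠ 0 := by
  intro h
  have := μ0_sq
  rw [h] at this
  simp [eq_comm, Complex.I_ne_zero] at this

lemma norm_exp_mu (x : ℝ) : ‖Complex.exp (μ0 * x)‖ = Real.exp (-( (Real.sqrt 2)⁻¹) * x) := by
  rw [Complex.norm_exp]
  congr 1
  simp [Complex.mul_re, μ0_re]

lemma memLp_expμ : MemLp (fun x : ℝ => Complex.exp (μ0 * x)) 2 halfLine := by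
  have hmeas : AEStronglyMeasurable (fun x : ℝ => Complex.exp (μ0 * x)) halfLine :=
    (Complex.continuous_exp.comp (by continuity)).aestronglyMeasurable
  rw [memLp_two_iff_integrable_sq_norm hmeas]
  have h : IntegrableOn (fun x : ℝ => Real.exp (-Real.sqrt 2 * x)) (Ioi 0) := by
    simpa [neg_mul] using exp_neg_integrableOn_Ioi 0 (Real.sqrt_pos.mpr (by norm_num : (0:ℝ)<2))
  rw [halfLine]
  apply h.congr_fun ?_ measurableSet_Ioi
  intro x _
  simp only
  rw [norm_exp_mu, sq, ← Real.exp_add]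
  congr 1
  have h2 : Real.sqrt 2 * Real.sqrt 2 = 2 := Real.mul_self_sqrt (by norm_num)
  have hne : Real.sqrt 2 ≠ 0 := (Real.sqrt_pos.mpr (by norm_num : (0:ℝ)<2)).ne'
  field_simp
  rw [Real.sq_sqrt (by norm_num)]; ring

end StarProof

namespace StarProof2
open StarProof intervalIntegral

lemma coeff_zero (B : ℂ) (h : MemLp (fun x : ℝ => B * Complex.exp (-μ0 * x)) 2 halfLine) :
    B = 0 := by
  by_contra hB
  have hmem : ∀ᵐ x ∂halfLine, x ∈ Ioi (0:ℝ) := ae_restrict_mem measurableSet_Ioi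
  have hconst : MemLp (fun _ : ℝ => B) 2 halfLine := by
    refine h.mono aestronglyMeasurable_const ?_
    filter_upwards [hmem] with x hx
    have : ‖B * Complex.exp (-μ0 * x)‖ = ‖B‖ * Real.exp ((Real.sqrt 2)⁻¹ * x) := by
      rw [norm_mul]
      congr 1
      rw [Complex.norm_exp]
      congr 1
      simp [Complex.mul_re, μ0_re]
    rw [this]
    nlinarith [Real.one_le_exp (mul_nonneg (by positivity) (le_of_lt hx) : (0:ℝ) ≤ (Real.sqrt 2)⁻¹ * x), norm_nonneg B]
  have := (memLp_const_iff (by norm_num) (by norm_num)).mp hconst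
  rcases this with h0 | hfin
  · exact hB h0
  · rw [halfLine] at hfin
    simp [Real.volume_Ioi] at hfin

lemma halfLine_def : halfLine = volume.restrict (Set.Ioi 0) := rfl

lemma memLp_intervalIntegrable {f : ℝ → ℂ} (hf : MemLp f 2 halfLine) {x : ℝ}
    (hx : (0:ℝ) ≤ x) : IntervalIntegrable f volume 0 x := by
  have h1 : MemLp f 2 (halfLine.restrict (Icc 0 x)) := hf.restrict _
  rw [halfLine_def, Measure.restrict_restrict measurableSet_Icc] at h1
  have hset : Icc (0:ℝ) x ∩ Ioi 0 = Ioc 0 x := by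
    ext y; constructor
    · rintro ⟨⟨_, h2⟩, h3⟩; exact ⟨h3, h2⟩
    · rintro ⟨h1', h2⟩; exact ⟨⟨le_of_lt h1', h2⟩, h1'⟩
  rw [hset] at h1
  haveI : IsFiniteMeasure (volume.restrict (Ioc (0:ℝ) x)) := ⟨by simp [Real.volume_Ioc]⟩
  rw [intervalIntegrable_iff_integrableOn_Ioc_of_le hx]
  exact h1.integrable (by norm_num)

def eμ : Lp ℂ 2 halfLine := StarProof.memLp_expμ.toLp _

lemma coeFn_eμ : ⇑eμ =ᵐ[halfLine] fun x : ℝ => Complex.exp (μ0 * x) :=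
  MemLp.coeFn_toLp _

lemma edge_ode (g g' : ℝ → ℂ)
    (hg : ∀ x, 0 ≤ x → g x = g 0 + ∫ s in (0:ℝ)..x, g' s)
    (hg' : ∀ x, 0 ≤ x → g' x = g' 0 + ∫ s in (0:ℝ)..x, -Complex.I * g s)
    (hL2 : MemLp g 2 halfLine) (hL2' : MemLp g' 2 halfLine) :
    ∀ x, 0 ≤ x → g x = g 0 * Complex.exp (μ0 * x) := by
  -- local integrability of g'
  have hInt : ∀ X : ℝ, 0 ≤ X → IntegrableOn g' (Icc 0 X) volume := by
    intro X hX
    have h1 : MemLp g' 2 (halfLine.restrict (Icc 0 X)) := hL2'.restrict _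
    rw [halfLine, Measure.restrict_restrict measurableSet_Icc] at h1
    have hset : Icc (0:ℝ) X ∩ Ioi 0 = Ioc 0 X := by
      ext y; constructor
      · rintro ⟨⟨_, h2⟩, h3⟩; exact ⟨h3, h2⟩
      · rintro ⟨h1', h2⟩; exact ⟨⟨le_of_lt h1', h2⟩, h1'⟩
    rw [hset] at h1
    haveI : IsFiniteMeasure (volume.restrict (Ioc (0:ℝ) X)) :=
      ⟨by simp [Real.volume_Ioc]⟩
    have h2 : IntegrableOn g' (Ioc 0 X) volume := h1.integrable (by norm_num)
    exact h2.congr_set_ae Ioc_ae_eq_Icc.symm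
  have hIntI : ∀ X : ℝ, 0 ≤ X → IntervalIntegrable g' volume 0 X := by
    intro X hX
    rw [intervalIntegrable_iff_integrableOn_Ioc_of_le hX]
    exact (hInt X hX).mono_set Ioc_subset_Icc_self
  -- continuity of g on Icc 0 X
  have hcg : ∀ X : ℝ, 0 ≤ X → ContinuousOn g (Icc 0 X) := by
    intro X hX
    have hprim := intervalIntegral.continuousOn_primitive_interval
      (μ := volume) (a := 0) (b := X) (f := g')
      (by rw [uIcc_of_le hX]; exact hInt X hX)
    rw [uIcc_of_le hX] at hprim
    exact (continuousOn_const.add hprim).congr fun y hy => hg y hy.1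
  -- continuity of g' on Icc 0 X
  have hcg' : ∀ X : ℝ, 0 ≤ X → ContinuousOn g' (Icc 0 X) := by
    intro X hX
    have hint2 : IntegrableOn (fun s => -Complex.I * g s) (Icc 0 X) volume :=
      (((hcg X hX).const_smul (-Complex.I)).integrableOn_compact isCompact_Icc)
    have hprim := intervalIntegral.continuousOn_primitive_interval
      (μ := volume) (a := 0) (b := X) (f := fun s => -Complex.I * g s)
      (by rw [uIcc_of_le hX]; exact hint2)
    rw [uIcc_of_le hX] at hprim
    exact (continuousOn_const.add hprim).congr fun y hy => hg' y hy.1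
  -- neighborhood membership
  have hmemIcc : ∀ X : ℝ, ∀ x ∈ Ico (0:ℝ) X, Icc (0:ℝ) X ∈ nhdsWithin x (Ici x) := by
    intro X x hx
    apply mem_nhdsWithin.mpr
    exact ⟨Iio X, isOpen_Iio, hx.2, fun y hy => ⟨le_trans hx.1 hy.2, le_of_lt hy.1⟩⟩
  -- derivative of g within Ici x
  have hdg : ∀ X : ℝ, ∀ x ∈ Ico (0:ℝ) X, HasDerivWithinAt g (g' x) (Ici x) x := by
    intro X x hx
    have hX : (0:ℝ) ≤ X := le_of_lt (lt_of_le_of_lt hx.1 hx.2)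
    have hmeas : StronglyMeasurableAtFilter g' (nhdsWithin x (Ioi x)) volume :=
      ⟨Icc 0 X, nhdsWithin_mono x Ioi_subset_Ici_self (hmemIcc X x hx),
        ((hcg' X hX).aestronglyMeasurable measurableSet_Icc)⟩
    have hctw : ContinuousWithinAt g' (Ioi x) x :=
      (((hcg' X hX).continuousWithinAt ⟨hx.1, le_of_lt hx.2⟩).mono_of_mem_nhdsWithin
        (hmemIcc X x hx)).mono Ioi_subset_Ici_self
    have hprim : HasDerivWithinAt (fun u => ∫ t in (0:ℝ)..u, g' t) (g' x) (Ici x) x :=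
      intervalIntegral.integral_hasDerivWithinAt_right (hIntI x hx.1) hmeas hctw
    exact (hprim.const_add (g 0)).congr (fun y hy => hg y (le_trans hx.1 hy)) (hg x hx.1)
  -- derivative of g' within Ici x
  have hdg' : ∀ X : ℝ, ∀ x ∈ Ico (0:ℝ) X, HasDerivWithinAt g' (-Complex.I * g x) (Ici x) x := by
    intro X x hx
    have hX : (0:ℝ) ≤ X := le_of_lt (lt_of_le_of_lt hx.1 hx.2)
    have hcont2 : ContinuousOn (fun s => -Complex.I * g s) (Icc 0 X) :=
      continuousOn_const.mul (hcg X hX)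
    have hii : IntervalIntegrable (fun s => -Complex.I * g s) volume 0 x := by
      apply ContinuousOn.intervalIntegrable
      rw [uIcc_of_le hx.1]
      exact hcont2.mono (Icc_subset_Icc le_rfl (le_of_lt hx.2))
    have hmeas : StronglyMeasurableAtFilter (fun s => -Complex.I * g s)
        (nhdsWithin x (Ioi x)) volume :=
      ⟨Icc 0 X, nhdsWithin_mono x Ioi_subset_Ici_self (hmemIcc X x hx),
        (hcont2.aestronglyMeasurable measurableSet_Icc)⟩
    have hctw : ContinuousWithinAt (fun s => -Complex.I * g s) (Ioi x) x :=
      ((hcont2.continuousWithinAt ⟨hx.1, le_of_lt hx.2⟩).mono_of_mem_nhdsWithin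
        (hmemIcc X x hx)).mono Ioi_subset_Ici_self
    have hprim : HasDerivWithinAt (fun u => ∫ t in (0:ℝ)..u, -Complex.I * g t)
        (-Complex.I * g x) (Ici x) x :=
      intervalIntegral.integral_hasDerivWithinAt_right hii hmeas hctw
    exact (hprim.const_add (g' 0)).congr (fun y hy => hg' y (le_trans hx.1 hy)) (hg' x hx.1)
  -- derivative of complex exponentials
  have hderivExp : ∀ (a : ℂ) (x : ℝ),
      HasDerivAt (fun y : ℝ => Complex.exp (a * y)) (a * Complex.exp (a * x)) x := by
    intro a x
    have h1 : HasDerivAt (fun y : ℝ => (y : ℂ)) 1 x := by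
      simpa using (hasDerivAt_id x).ofReal_comp
    have h2 := (h1.const_mul a).cexp
    simpa [mul_comm] using h2
  set c : ℂ := g' 0 - μ0 * g 0 with hc
  clear_value c
  -- stage 1
  have stage1 : ∀ X : ℝ, 0 ≤ X → ∀ x ∈ Icc (0:ℝ) X,
      g' x - μ0 * g x = c * Complex.exp (-μ0 * x) := by
    intro X hX
    set F : ℝ → ℂ := fun y => Complex.exp (μ0 * y) * (g' y - μ0 * g y) with hF
    have hFc : ContinuousOn F (Icc 0 X) := by
      apply ContinuousOn.mul
      · exact (Complex.continuous_exp.comp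
          (continuous_const.mul Complex.continuous_ofReal)).continuousOn
      · exact (hcg' X hX).sub (continuousOn_const.mul (hcg X hX))
    have hFd : ∀ x ∈ Ico (0:ℝ) X, HasDerivWithinAt F 0 (Ici x) x := by
      intro x hx
      have h1 := (hderivExp μ0 x).hasDerivWithinAt (s := Ici x)
      have h2 := (hdg' X x hx).sub ((hdg X x hx).const_mul μ0)
      have h3 := h1.mul h2
      refine h3.congr_deriv ?_
      simp only [Pi.sub_apply]
      have hsq : -Complex.I = μ0 ^ 2 := μ0_sq.symm
      rw [hsq]; ring
    have hK := constant_of_has_deriv_right_zero hFc hFd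
    intro x hx
    have h0 := hK x hx
    have hF0 : F 0 = c := by simp [hF, hc]
    rw [hF0] at h0
    have hone : Complex.exp (μ0 * x) * Complex.exp (-μ0 * x) = 1 := by
      rw [← Complex.exp_add]; ring_nf; exact Complex.exp_zero
    have h0' : Complex.exp (μ0 * x) * (g' x - μ0 * g x) = c := h0
    linear_combination Complex.exp (-μ0 * (x:ℝ)) * h0' -
      (g' x - μ0 * g x) * hone + (g' x - μ0 * g x) * mul_comm (Complex.exp (μ0 * (x:ℝ))) (Complex.exp (-μ0 * (x:ℝ)))
  -- stage 2
  set d : ℂ := c / (-2 * μ0) with hdd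
  have hd : d * (-2 * μ0) = c := by
    rw [hdd]; field_simp [μ0_ne]
  clear_value d
  have stage2 : ∀ X : ℝ, 0 ≤ X → ∀ x ∈ Icc (0:ℝ) X,
      g x = (g 0 - d) * Complex.exp (μ0 * x) + d * Complex.exp (-μ0 * x) := by
    intro X hX
    set G : ℝ → ℂ := fun y => Complex.exp (-μ0 * y) * g y - d * Complex.exp (-2 * μ0 * y)
      with hG
    have hGc : ContinuousOn G (Icc 0 X) := by
      apply ContinuousOn.sub
      · exact ((Complex.continuous_exp.comp
          (continuous_const.mul Complex.continuous_ofReal)).continuousOn).mul (hcg X hX)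
      · exact (continuous_const.mul (Complex.continuous_exp.comp
          (continuous_const.mul Complex.continuous_ofReal))).continuousOn
    have hGd : ∀ x ∈ Ico (0:ℝ) X, HasDerivWithinAt G 0 (Ici x) x := by
      intro x hx
      have h1 := (hderivExp (-μ0) x).hasDerivWithinAt (s := Ici x)
      have h2 := (h1.mul (hdg X x hx)).sub
        (((hderivExp (-2 * μ0) x).hasDerivWithinAt (s := Ici x)).const_mul d)
      refine h2.congr_deriv (Eq.symm ?_)
      have hu := stage1 X hX x ⟨hx.1, le_of_lt hx.2⟩
      have hdexp : Complex.exp (-2 * μ0 * x) =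
          Complex.exp (-μ0 * x) * Complex.exp (-μ0 * x) := by
        rw [← Complex.exp_add]; congr 1; ring
      rw [hdexp]
      linear_combination (-(Complex.exp (-μ0 * (x:ℝ)))) * hu +
        Complex.exp (-μ0 * (x:ℝ)) * Complex.exp (-μ0 * (x:ℝ)) * hd
    have hK := constant_of_has_deriv_right_zero hGc hGd
    intro x hx
    have h0 := hK x hx
    have hG0 : G 0 = g 0 - d := by simp [hG]
    rw [hG0] at h0
    have h0' : Complex.exp (-μ0 * x) * g x - d * Complex.exp (-2 * μ0 * x) = g 0 - d := h0
    have hone : Complex.exp (μ0 * x) * Complex.exp (-μ0 * x) = 1 := by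
      rw [← Complex.exp_add]; ring_nf; exact Complex.exp_zero
    have hdexp : Complex.exp (-2 * μ0 * x) =
        Complex.exp (-μ0 * x) * Complex.exp (-μ0 * x) := by
      rw [← Complex.exp_add]; congr 1; ring
    rw [hdexp] at h0'
    linear_combination Complex.exp (μ0 * (x:ℝ)) * h0' -
      (g x - d * Complex.exp (-μ0 * (x:ℝ))) * hone
  -- L² forces d = 0
  have hrep : ∀ x : ℝ, 0 ≤ x →
      g x = (g 0 - d) * Complex.exp (μ0 * x) + d * Complex.exp (-μ0 * x) :=
    fun x hx => stage2 x hx x ⟨hx, le_rfl⟩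
  have hmemd : MemLp (fun x : ℝ => d * Complex.exp (-μ0 * x)) 2 halfLine := by
    have h1 : MemLp (fun x : ℝ => g x - (g 0 - d) * Complex.exp (μ0 * x)) 2 halfLine :=
      hL2.sub (memLp_expμ.const_mul (g 0 - d))
    apply MemLp.ae_eq ?_ h1
    have hmem : ∀ᵐ x ∂halfLine, x ∈ Ioi (0:ℝ) := ae_restrict_mem measurableSet_Ioi
    filter_upwards [hmem] with x hx
    rw [hrep x (le_of_lt hx)]; ring
  have hd0 : d = 0 := coeff_zero d hmemd
  intro x hx
  rw [hrep x hx, hd0]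
  ring

end StarProof2

/-- Finite-rank resolvent difference on the star graph: if `Δ_D` is the Dirichlet
(decoupled) Laplacian, `Δ_M` the Laplacian with vertex matrices `(A,B)` satisfying
`rank (A B) = n` and `AB*` self-adjoint, and `R_D, R_M` the resolvents
`(−Δ − i)⁻¹`, then `R_D − R_M` has rank at most `n` (in particular it is finite
rank, hence trace class). -/
theorem starGraph_resolvent_difference_finite_rank
    (n : ℕ) (A B : Matrix (Fin n) (Fin n) ℂ)
    (hrank : (Matrix.of fun i => Sum.elim (A i) (B i) :
      Matrix (Fin n) (Fin n ⊕ Fin n) ℂ).rank = n)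
    (hsa : (A * B.conjTranspose).IsHermitian)
    (ΔD ΔM : starGraphL2 n →ₗ.[ℂ] starGraphL2 n)
    (hΔD : IsStarGraphLaplacian n (1 : Matrix (Fin n) (Fin n) ℂ) 0 ΔD)
    (hΔM : IsStarGraphLaplacian n A B ΔM)
    (RD RM : starGraphL2 n →L[ℂ] starGraphL2 n)
    (hRD : ∀ u : starGraphL2 n, (RD u, -u - Complex.I • RD u) ∈ ΔD.graph)
    (hRM : ∀ u : starGraphL2 n, (RM u, -u - Complex.I • RM u) ∈ ΔM.graph) :
    Module.rank ℂ (LinearMap.range (RD.toLinearMap - RM.toLinearMap)) ≤ n := by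
  classical
  set E : Fin n → starGraphL2 n := fun j => WithLp.toLp 2 (Pi.single j StarProof2.eμ) with hE
  have hle : LinearMap.range (RD.toLinearMap - RM.toLinearMap) ≤
      Submodule.span ℂ (Set.range E) := by
    rintro w ⟨u, rfl⟩
    obtain ⟨fD, fD', fD'', hgD, hgD', hD2, hD2', hD2'', -, huD, hvD⟩ := (hΔD _ _).mp (hRD u)
    obtain ⟨fM, fM', fM'', hgM, hgM', hM2, hM2', hM2'', -, huM, hvM⟩ := (hΔM _ _).mp (hRM u)
    have key : ∀ j : Fin n, ∀ x : ℝ, 0 ≤ x →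
        fD j x - fM j x = (fD j 0 - fM j 0) * Complex.exp (StarProof.μ0 * x) := by
      intro j
      have hsub1 : ∀ x : ℝ, 0 ≤ x → fD j x - fM j x = (fD j 0 - fM j 0) +
          ∫ s in (0:ℝ)..x, (fD' j s - fM' j s) := by
        intro x hx
        rw [intervalIntegral.integral_sub (StarProof2.memLp_intervalIntegrable (hD2' j) hx)
          (StarProof2.memLp_intervalIntegrable (hM2' j) hx), hgD j x, hgM j x]
        ring
      have hae : (fun s => fD'' j s - fM'' j s) =ᵐ[halfLine]
          fun s => -Complex.I * (fD j s - fM j s) := by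
        have e1 : ⇑((-u - Complex.I • RD u) j) =ᵐ[halfLine]
            (fun x => -(u j x) - Complex.I * ((RD u) j x)) := by
          have h1 : ((-u - Complex.I • RD u) j) = -(u j) - Complex.I • ((RD u) j) := rfl
          rw [h1]
          filter_upwards [Lp.coeFn_sub (-(u j)) (Complex.I • ((RD u) j)),
            Lp.coeFn_neg (u j), Lp.coeFn_smul Complex.I ((RD u) j)] with x hx1 hx2 hx3
          rw [hx1]
          simp only [Pi.sub_apply, Pi.neg_apply, Pi.smul_apply, smul_eq_mul] at hx2 hx3 ⊢
          rw [hx2, hx3]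
        have e2 : ⇑((-u - Complex.I • RM u) j) =ᵐ[halfLine]
            (fun x => -(u j x) - Complex.I * ((RM u) j x)) := by
          have h1 : ((-u - Complex.I • RM u) j) = -(u j) - Complex.I • ((RM u) j) := rfl
          rw [h1]
          filter_upwards [Lp.coeFn_sub (-(u j)) (Complex.I • ((RM u) j)),
            Lp.coeFn_neg (u j), Lp.coeFn_smul Complex.I ((RM u) j)] with x hx1 hx2 hx3
          rw [hx1]
          simp only [Pi.sub_apply, Pi.neg_apply, Pi.smul_apply, smul_eq_mul] at hx2 hx3 ⊢
          rw [hx2, hx3]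
        filter_upwards [e1, e2, hvD j, hvM j, huD j, huM j] with x h1 h2 h3 h4 h5 h6
        rw [← h3, ← h4, h1, h2, ← h5, ← h6]
        ring
      have hsub2 : ∀ x : ℝ, 0 ≤ x → fD' j x - fM' j x = (fD' j 0 - fM' j 0) +
          ∫ s in (0:ℝ)..x, -Complex.I * (fD j s - fM j s) := by
        intro x hx
        have h1 : (∫ s in (0:ℝ)..x, (fD'' j s - fM'' j s)) =
            ∫ s in (0:ℝ)..x, -Complex.I * (fD j s - fM j s) := by
          apply intervalIntegral.integral_congr_ae
          have hae' := hae
          rw [StarProof2.halfLine_def] at hae'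
          have h2 := (ae_restrict_iff' measurableSet_Ioi).mp hae'
          filter_upwards [h2] with s hs hsmem
          apply hs
          rw [uIoc_of_le hx] at hsmem
          exact hsmem.1
        rw [← h1, intervalIntegral.integral_sub (StarProof2.memLp_intervalIntegrable (hD2'' j) hx)
          (StarProof2.memLp_intervalIntegrable (hM2'' j) hx), hgD' j x, hgM' j x]
        ring
      exact StarProof2.edge_ode (fun x => fD j x - fM j x) (fun x => fD' j x - fM' j x)
        hsub1 hsub2 ((hD2 j).sub (hM2 j)) ((hD2' j).sub (hM2' j))
    have hcomp : ∀ k : Fin n, (RD u - RM u) k = (fD k 0 - fM k 0) • StarProof2.eμ := by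
      intro k
      apply Lp.ext (μ := halfLine)
      have h1 : ((RD u - RM u) k) = (RD u) k - (RM u) k := rfl
      rw [h1]
      have hmem : ∀ᵐ x ∂halfLine, x ∈ Ioi (0:ℝ) := ae_restrict_mem measurableSet_Ioi
      filter_upwards [Lp.coeFn_sub ((RD u) k) ((RM u) k), huD k, huM k,
        Lp.coeFn_smul (fD k 0 - fM k 0) StarProof2.eμ, StarProof2.coeFn_eμ, hmem]
        with x hx1 hx2 hx3 hx4 hx5 hx6
      rw [hx1, hx4]
      simp only [Pi.sub_apply, Pi.smul_apply, smul_eq_mul]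
      rw [hx2, hx3, key k x (le_of_lt hx6), hx5]
    have hsum : (RD.toLinearMap - RM.toLinearMap) u = ∑ j, (fD j 0 - fM j 0) • E j := by
      have h0 : (RD.toLinearMap - RM.toLinearMap) u = RD u - RM u := rfl
      rw [h0]
      refine PiLp.ext fun k => ?_
      rw [hcomp k]
      have h2 : (∑ j, (fD j 0 - fM j 0) • E j) k
          = ∑ j, ((fD j 0 - fM j 0) • E j) k := by
        rw [WithLp.ofLp_sum, Finset.sum_apply]
      rw [h2]
      simp [hE, Pi.single_apply]
    rw [hsum]
    exact Submodule.sum_mem _ fun j _ =>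
      Submodule.smul_mem _ _ (Submodule.subset_span ⟨j, rfl⟩)
  calc Module.rank ℂ (LinearMap.range (RD.toLinearMap - RM.toLinearMap))
      ≤ Module.rank ℂ (Submodule.span ℂ (Set.range E)) := Submodule.rank_mono hle
    _ ≤ Cardinal.mk (Set.range E) := rank_span_le _
    _ ≤ Cardinal.mk (Fin n) := Cardinal.mk_range_le
    _ = n := by simp
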